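/- Let E : V_h → V_h be a linear map on a finite-dimensional inner product space with ‖Ev‖₁ ≤ Cγ‖v‖₁ for all v, where ‖·‖₁ is a norm with ‖v‖₀ ≤ C_P‖v‖₁ (Poincaré–Friedrichs). Suppose P̃ - P satisfies ⟨∇(P̃-P)u, ∇v⟩ = ⟨u, Ev⟩ for all u, v ∈ V_h, where ⟨∇·,∇·⟩ is the inner product inducing ‖·‖₁. Then ‖∇(P̃-P)u‖₀ = sup_{v≠0} ⟨u, Ev⟩/‖∇v‖₀ ≤ C C_P γ ‖u‖₀, and hence |⟨(P̃-P)u, u⟩| ≤ C C_P² γ ‖u‖₀² for all u. -/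

import Mathlib

open scoped ComplexInnerProductSpace

/-- Perturbation bound for the inexact Laplace preconditioner: with `D = P̃ - P`
satisfying `⟪∇Du, ∇v⟫ = ⟪u, Ev⟫`, the contraction `‖Ev‖₁ ≤ Cγ‖v‖₁` (where
`‖v‖₁ = ‖G v‖`) and Poincaré–Friedrichs `‖v‖₀ ≤ C_P‖G v‖` give
`‖G (D u)‖ ≤ C C_P γ ‖u‖` and `|⟪Du, u⟫| ≤ C C_P² γ ‖u‖²`. -/
theorem stmt_11 {V W : Type*} [NormedAddCommGroup V] [InnerProductSpace ℂ V]
    [NormedAddCommGroup W] [InnerProductSpace ℂ W]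
    (G : V →ₗ[ℂ] W) (E D : V →ₗ[ℂ] V) (C C_P γ : ℝ)
    (hC : 0 < C) (hCP : 0 < C_P) (hγ0 : 0 ≤ γ) (hγ1 : γ < 1)
    (hE : ∀ v : V, ‖G (E v)‖ ≤ C * γ * ‖G v‖)
    (hPF : ∀ v : V, ‖v‖ ≤ C_P * ‖G v‖)
    (hD : ∀ u v : V, ⟪G (D u), G v⟫ = ⟪u, E v⟫)
    (u : V) :
    ‖G (D u)‖ ≤ C * C_P * γ * ‖u‖ ∧
      ‖⟪D u, u⟫‖ ≤ C * C_P^2 * γ * ‖u‖^2 := by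
  have key : ‖G (D u)‖ ≤ C * C_P * γ * ‖u‖ := by
    have h1 : ‖G (D u)‖ ^ 2 = ‖⟪G (D u), G (D u)⟫‖ := by
      rw [inner_self_eq_norm_sq_to_K]
      simp [sq_abs]
    rw [hD u (D u)] at h1
    have h2 : ‖⟪u, E (D u)⟫‖ ≤ ‖u‖ * ‖E (D u)‖ := by exact norm_inner_le_norm _ _
    have h3 : ‖E (D u)‖ ≤ C_P * ‖G (E (D u))‖ := hPF _
    have h4 : ‖G (E (D u))‖ ≤ C * γ * ‖G (D u)‖ := hE _
    have h5 : ‖G (D u)‖ ^ 2 ≤ ‖u‖ * (C_P * (C * γ * ‖G (D u)‖)) := by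
      calc ‖G (D u)‖ ^ 2 = ‖⟪u, E (D u)⟫‖ := h1
        _ ≤ ‖u‖ * ‖E (D u)‖ := h2
        _ ≤ ‖u‖ * (C_P * ‖G (E (D u))‖) := by
            gcongr
        _ ≤ ‖u‖ * (C_P * (C * γ * ‖G (D u)‖)) := by
            gcongr
    rcases eq_or_lt_of_le (norm_nonneg (G (D u))) with h0 | h0
    · rw [← h0]
      positivity
    · nlinarith [norm_nonneg u]
  refine ⟨key, ?_⟩
  calc ‖⟪D u, u⟫‖ ≤ ‖D u‖ * ‖u‖ := by exact norm_inner_le_norm _ _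
    _ ≤ (C_P * ‖G (D u)‖) * ‖u‖ := by gcongr; exact hPF _
    _ ≤ (C_P * (C * C_P * γ * ‖u‖)) * ‖u‖ := by gcongr
    _ = C * C_P ^ 2 * γ * ‖u‖ ^ 2 := by ring
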